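/- Let f : ℝ³ → [0,∞) be measurable with ∫_{ℝ³} |p| f(p) dp < ∞ and let h ∈ ℝ³. Then the function F is differentiable on the open subset of Sym3 consisting of positive definite matrices, and for every positive definite B ∈ Sym3 and every C ∈ Sym3 the derivative of F at B in direction C equals (det B)^{−1/2} · Σ_{i,j=1}^{3} [2Ψ(B)_{ij} − A_{ij} + (2/det A)((hᵀAh) A_{ij} − 2 (Ah)_i (Ah)_j)] C_{ij}, where A = B⁻¹. In particular, a positive definite B ∈ Sym3 is a critical point of F (i.e. all directional derivatives in symmetric directions vanish) if and only if the Fuchsian condition at B holds. -/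

import Mathlib

open MeasureTheory Matrix Real Filter Topology Set Asymptotics

noncomputable section

/-- 3×3 real matrices; symmetric ones form `Sym3`, encoded via `Matrix.IsSymm`/`Matrix.PosDef`. -/
abbrev Mat3 := Matrix (Fin 3) (Fin 3) ℝ

/-- vectors in ℝ³ -/
abbrev Vec3 := Fin 3 → ℝ

/-- Euclidean norm on ℝ³. -/
def enorm3 (p : Vec3) : ℝ := Real.sqrt (∑ i, p i ^ 2)

/-- the quadratic form pᵀBp. -/
def quadForm (B : Mat3) (p : Vec3) : ℝ := p ⬝ᵥ B.mulVec p

/-- Ψ(B)_{ij} = 4π (det B)^{1/2} ∫ (pᵀBp)^{−1/2} p_i p_j f(p) dp. -/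
def PsiM (f : Vec3 → ℝ) (B : Mat3) : Mat3 :=
  Matrix.of fun i j =>
    (4 * π) * Real.sqrt B.det * ∫ p : Vec3, (Real.sqrt (quadForm B p))⁻¹ * (p i * p j * f p)

/-- χ_b(k)_{ij} = 4π (det b)^{1/2} ∫ (pᵀbp)^{−3/2} ((bp)ᵀ k (bp)) p_i p_j f(p) dp. -/
def chiM (f : Vec3 → ℝ) (b : Mat3) (k : Mat3) : Mat3 :=
  Matrix.of fun i j =>
    (4 * π) * Real.sqrt b.det *
      ∫ p : Vec3, ((Real.sqrt (quadForm b p))⁻¹ ^ 3) * (quadForm k (b.mulVec p) * (p i * p j * f p))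

/-- With u = ah, w = kh, α = hᵀah and b = a⁻¹:
M_a(k) = (2/det a)((hᵀkh) a + α k − 2(u wᵀ + w uᵀ) + tr(bk)(2 u uᵀ − α a)). -/
def MM (a : Mat3) (h : Vec3) (k : Mat3) : Mat3 :=
  (2 / a.det) • ((h ⬝ᵥ k.mulVec h) • a + (h ⬝ᵥ a.mulVec h) • k
    - (2:ℝ) • (vecMulVec (a.mulVec h) (k.mulVec h) + vecMulVec (k.mulVec h) (a.mulVec h))
    + (a⁻¹ * k).trace • ((2:ℝ) • vecMulVec (a.mulVec h) (a.mulVec h) - (h ⬝ᵥ a.mulVec h) • a))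

/-- The Fuchsian condition at B (with A = B⁻¹):
2Ψ(B) = A − (2/det A)((hᵀAh) A − 2 (Ah)(Ah)ᵀ). -/
def FuchsCond (f : Vec3 → ℝ) (h : Vec3) (B : Mat3) : Prop :=
  (2:ℝ) • PsiM f B =
    B⁻¹ - (2 / (B⁻¹).det) •
      ((h ⬝ᵥ (B⁻¹).mulVec h) • B⁻¹ - (2:ℝ) • vecMulVec ((B⁻¹).mulVec h) ((B⁻¹).mulVec h))

/-- F(B) = 16π ∫ (pᵀBp)^{1/2} f dp + 2 (det B)^{−1/2} + 4 (det B)^{1/2} hᵀB⁻¹h. -/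
def Ffun (f : Vec3 → ℝ) (h : Vec3) (B : Mat3) : ℝ :=
  16 * π * (∫ p : Vec3, Real.sqrt (quadForm B p) * f p)
    + 2 * (Real.sqrt B.det)⁻¹ + 4 * Real.sqrt B.det * (h ⬝ᵥ (B⁻¹).mulVec h)

/-! ### Auxiliary lemmas -/

lemma quad_expand (M : Mat3) (p : Vec3) : quadForm M p = ∑ i, ∑ j, M i j * (p i * p j) := by
  simp [quadForm, dotProduct, Matrix.mulVec, Finset.mul_sum]
  congr 1; ext i; congr 1; ext j; ring

lemma quad_cont (M : Mat3) : Continuous (fun p : Vec3 => quadForm M p) := by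
  simp only [quad_expand]
  fun_prop

lemma quad_add_smul (B C : Mat3) (s : ℝ) (p : Vec3) :
    quadForm (B + s • C) p = quadForm B p + s * quadForm C p := by
  simp [quad_expand, Finset.mul_sum, ← Finset.sum_add_distrib]
  congr 1; ext i; congr 1; ext j; ring

lemma quad_zero (M : Mat3) : quadForm M 0 = 0 := by simp [quadForm]

lemma quad_smul (M : Mat3) (t : ℝ) (p : Vec3) : quadForm M (t • p) = t^2 * quadForm M p := by
  simp [quadForm, Matrix.mulVec_smul, dotProduct_smul, smul_dotProduct, smul_eq_mul]
  ring

lemma enorm3_nonneg (p : Vec3) : 0 ≤ enorm3 p := Real.sqrt_nonneg _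

lemma enorm3_sq (p : Vec3) : enorm3 p ^ 2 = ∑ i, p i ^ 2 :=
  Real.sq_sqrt (Finset.sum_nonneg fun i _ => sq_nonneg _)

lemma abs_le_enorm3 (p : Vec3) (i : Fin 3) : |p i| ≤ enorm3 p := by
  rw [← Real.sqrt_sq_eq_abs]
  exact Real.sqrt_le_sqrt (Finset.single_le_sum (fun j _ => sq_nonneg (p j)) (Finset.mem_univ i))

def Knorm (M : Mat3) : ℝ := ∑ i, ∑ j, |M i j|

lemma Knorm_nonneg (M : Mat3) : 0 ≤ Knorm M :=
  Finset.sum_nonneg fun i _ => Finset.sum_nonneg fun j _ => abs_nonneg _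

lemma quad_le (M : Mat3) (p : Vec3) : |quadForm M p| ≤ Knorm M * enorm3 p ^ 2 := by
  rw [quad_expand, Knorm, Finset.sum_mul]
  refine (Finset.abs_sum_le_sum_abs _ _).trans (Finset.sum_le_sum fun i _ => ?_)
  rw [Finset.sum_mul]
  refine (Finset.abs_sum_le_sum_abs _ _).trans (Finset.sum_le_sum fun j _ => ?_)
  rw [abs_mul, abs_mul, sq]
  refine mul_le_mul_of_nonneg_left ?_ (abs_nonneg _)
  exact mul_le_mul (abs_le_enorm3 p i) (abs_le_enorm3 p j) (abs_nonneg _) (enorm3_nonneg p)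

lemma enorm3_cont : Continuous enorm3 := by
  unfold enorm3; fun_prop

lemma enorm3_pos {p : Vec3} (hp : p ≠ 0) : 0 < enorm3 p := by
  apply Real.sqrt_pos.2
  rcases Function.ne_iff.1 hp with ⟨i, hi⟩
  have h1 : 0 < p i ^ 2 := by have : p i ≠ 0 := hi; positivity
  exact h1.trans_le (Finset.single_le_sum (fun j _ => sq_nonneg (p j)) (Finset.mem_univ i))

lemma posdef_quad_pos {B : Mat3} (hB : B.PosDef) {p : Vec3} (hp : p ≠ 0) : 0 < quadForm B p := by
  have := hB.dotProduct_mulVec_pos hp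
  simpa [quadForm, star_trivial] using this

lemma posdef_lower {B : Mat3} (hB : B.PosDef) :
    ∃ c > 0, ∀ p : Vec3, c * enorm3 p ^ 2 ≤ quadForm B p := by
  set S : Set Vec3 := {p | ∑ i, p i ^ 2 = 1} with hS
  have hSc : IsCompact S := by
    have hclosed : IsClosed S := isClosed_eq (by fun_prop) continuous_const
    have hbdd : Bornology.IsBounded S := by
      refine Metric.isBounded_iff_subset_closedBall 0 |>.2 ⟨1, fun p hp => ?_⟩
      simp only [Metric.mem_closedBall, dist_zero_right]
      rw [pi_norm_le_iff_of_nonneg zero_le_one]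
      intro i
      rw [Real.norm_eq_abs, ← Real.sqrt_sq_eq_abs, show (1:ℝ) = Real.sqrt 1 by simp]
      exact Real.sqrt_le_sqrt (by
        calc p i ^ 2 ≤ ∑ j, p j ^ 2 :=
              Finset.single_le_sum (fun j _ => sq_nonneg (p j)) (Finset.mem_univ i)
        _ = 1 := hp)
    exact Metric.isCompact_of_isClosed_isBounded hclosed hbdd
  have hSne : S.Nonempty := by
    refine ⟨fun i => if i = 0 then 1 else 0, ?_⟩
    simp [hS, Fin.sum_univ_three]
  obtain ⟨q, hqS, hq⟩ := hSc.exists_isMinOn hSne (quad_cont B).continuousOn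
  have hq0 : q ≠ 0 := by
    intro h; rw [h] at hqS; simp [hS] at hqS
  refine ⟨quadForm B q, posdef_quad_pos hB hq0, fun p => ?_⟩
  by_cases hp : p = 0
  · simp [hp, enorm3, quadForm]
  · have he : 0 < enorm3 p := enorm3_pos hp
    set t := enorm3 p
    have hmem : (t⁻¹ • p) ∈ S := by
      simp only [hS, mem_setOf_eq, Pi.smul_apply, smul_eq_mul, mul_pow]
      rw [← Finset.mul_sum, ← enorm3_sq]
      field_simp
      rfl
    have h1 : quadForm B q ≤ quadForm B (t⁻¹ • p) := hq hmem
    have h2 : quadForm B (t⁻¹ • p) = t⁻¹^2 * quadForm B p := quad_smul B t⁻¹ p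
    rw [h2] at h1
    have := mul_le_mul_of_nonneg_left h1 (by positivity : (0:ℝ) ≤ t^2)
    calc quadForm B q * t ^ 2 = t^2 * quadForm B q := by ring
    _ ≤ t^2 * (t⁻¹^2 * quadForm B p) := this
    _ = quadForm B p := by field_simp

/-! ### 3×3 polynomial identities -/

lemma det_add_smul (B C : Mat3) (s : ℝ) :
    (B + s • C).det = B.det + s * (B.adjugate * C).trace
      + s^2 * (C.adjugate * B).trace + s^3 * C.det := by
  simp [Matrix.det_fin_three, Matrix.adjugate_fin_three, Matrix.trace_fin_three,
    Matrix.mul_apply, Matrix.vecMul, dotProduct, Fin.sum_univ_three, Matrix.add_apply,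
    Matrix.smul_apply, smul_eq_mul, Matrix.cons_val_zero, Matrix.cons_val_one, Matrix.head_cons,
    Matrix.cons_val_two, Matrix.tail_cons, Matrix.head_fin_const]
  ring

lemma g_poly (B C : Mat3) (h : Vec3) (s : ℝ) :
    h ⬝ᵥ ((B + s • C).adjugate).mulVec h
      = h ⬝ᵥ (B.adjugate).mulVec h
        + s * (h ⬝ᵥ ((B + C).adjugate).mulVec h - h ⬝ᵥ (B.adjugate).mulVec h
               - h ⬝ᵥ (C.adjugate).mulVec h)
        + s^2 * (h ⬝ᵥ (C.adjugate).mulVec h) := by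
  simp [Matrix.adjugate_fin_three, dotProduct, Matrix.mulVec, Matrix.vecMul, Fin.sum_univ_three,
    Matrix.add_apply, Matrix.smul_apply, smul_eq_mul, Matrix.cons_val_zero, Matrix.cons_val_one,
    Matrix.head_cons, Matrix.cons_val_two, Matrix.tail_cons, Matrix.head_fin_const]
  ring

lemma symm_apply {M : Mat3} (hM : Mᵀ = M) (i j : Fin 3) : M j i = M i j :=
  (Matrix.transpose_apply M i j).symm.trans (congrFun (congrFun hM i) j)

lemma trace_adj_mul (B C : Mat3) (hC : Cᵀ = C) :
    (B.adjugate * C).trace = ∑ i, ∑ j, B.adjugate i j * C i j := by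
  have c10 := symm_apply hC 0 1
  have c20 := symm_apply hC 0 2
  have c21 := symm_apply hC 1 2
  simp only [Matrix.trace_fin_three, Matrix.mul_apply, Fin.sum_univ_three]
  rw [c10, c20, c21]

lemma key_identity (B C : Mat3) (h : Vec3) (hB : Bᵀ = B) (hC : Cᵀ = C) :
    B.det * (h ⬝ᵥ ((B + C).adjugate).mulVec h - h ⬝ᵥ (B.adjugate).mulVec h
        - h ⬝ᵥ (C.adjugate).mulVec h)
      = (B.adjugate * C).trace * (h ⬝ᵥ (B.adjugate).mulVec h)
        - ((B.adjugate.mulVec h) ⬝ᵥ C.mulVec (B.adjugate.mulVec h)) := by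
  have b10 := symm_apply hB 0 1
  have b20 := symm_apply hB 0 2
  have b21 := symm_apply hB 1 2
  have c10 := symm_apply hC 0 1
  have c20 := symm_apply hC 0 2
  have c21 := symm_apply hC 1 2
  simp only [Matrix.det_fin_three, Matrix.adjugate_fin_three, Matrix.trace_fin_three,
    Matrix.mul_apply, Matrix.vecMul, dotProduct, Matrix.mulVec, Fin.sum_univ_three,
    Matrix.add_apply, Matrix.cons_val_zero, Matrix.cons_val_one, Matrix.head_cons,
    Matrix.cons_val_two, Matrix.tail_cons, Matrix.head_fin_const, Matrix.of_apply,
    Matrix.cons_val', Matrix.empty_val', Matrix.cons_val_fin_one]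
  rw [b10, b20, b21, c10, c20, c21]
  ring

lemma quad_expand2 (C : Mat3) (u : Vec3) :
    ∑ i, ∑ j, (u i * u j) * C i j = u ⬝ᵥ C.mulVec u := by
  simp [dotProduct, Matrix.mulVec, Finset.mul_sum]
  congr 1; ext i; congr 1; ext j; ring

/-! ### integrability -/

lemma integrable_dom {f : Vec3 → ℝ} (hnonneg : ∀ p, 0 ≤ f p)
    (hint : Integrable (fun p : Vec3 => enorm3 p * f p))
    {g : Vec3 → ℝ} (hg : AEStronglyMeasurable g volume) {K : ℝ}
    (hle : ∀ p, |g p| ≤ K * (enorm3 p * f p)) : Integrable g := by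
  refine (hint.const_mul K).mono hg (ae_of_all _ fun p => ?_)
  rw [Real.norm_eq_abs, Real.norm_eq_abs]
  exact (hle p).trans (le_abs_self _)

/-- integrability of the Ψ integrands and derivative of the integral term -/
lemma intpart {f : Vec3 → ℝ} (hmeas : Measurable f) (hnonneg : ∀ p, 0 ≤ f p)
    (hint : Integrable (fun p : Vec3 => enorm3 p * f p))
    (B C : Mat3) (hB : B.PosDef) :
    (∀ i j : Fin 3,
       Integrable (fun p : Vec3 => (Real.sqrt (quadForm B p))⁻¹ * (p i * p j * f p))) ∧
    HasDerivAt (fun s : ℝ => ∫ p : Vec3, Real.sqrt (quadForm (B + s • C) p) * f p)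
      (∫ p : Vec3, quadForm C p * (2 * Real.sqrt (quadForm B p))⁻¹ * f p) 0 := by
  obtain ⟨c, hc, hlow⟩ := posdef_lower hB
  have sqrtc_pos : 0 < Real.sqrt c := Real.sqrt_pos.2 hc
  have hsqrt_low : ∀ p : Vec3, Real.sqrt c * enorm3 p ≤ Real.sqrt (quadForm B p) := by
    intro p
    have := hlow p
    calc Real.sqrt c * enorm3 p = Real.sqrt (c * enorm3 p ^ 2) := by
          rw [Real.sqrt_mul hc.le, Real.sqrt_sq (enorm3_nonneg p)]
      _ ≤ Real.sqrt (quadForm B p) := Real.sqrt_le_sqrt this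
  have hPsiInt : ∀ i j : Fin 3,
      Integrable (fun p : Vec3 => (Real.sqrt (quadForm B p))⁻¹ * (p i * p j * f p)) := by
    intro i j
    have hmg : AEStronglyMeasurable
        (fun p : Vec3 => (Real.sqrt (quadForm B p))⁻¹ * (p i * p j * f p)) volume := by
      apply Measurable.aestronglyMeasurable
      exact (((quad_cont B).measurable.sqrt).inv).mul
        (((measurable_pi_apply i).mul (measurable_pi_apply j)).mul hmeas)
    refine integrable_dom hnonneg hint hmg (K := (Real.sqrt c)⁻¹) fun p => ?_
    by_cases hp : p = 0
    · subst hp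
      simp only [Pi.zero_apply, mul_zero, zero_mul, abs_zero]
      exact mul_nonneg (by positivity) (mul_nonneg (enorm3_nonneg 0) (hnonneg 0))
    · have he : 0 < enorm3 p := enorm3_pos hp
      have hq : 0 < Real.sqrt (quadForm B p) :=
        lt_of_lt_of_le (by positivity) (hsqrt_low p)
      rw [abs_mul, abs_mul, abs_mul, abs_inv, abs_of_pos hq, abs_of_nonneg (hnonneg p)]
      have h1 : (Real.sqrt (quadForm B p))⁻¹ ≤ (Real.sqrt c * enorm3 p)⁻¹ :=
        inv_anti₀ (mul_pos sqrtc_pos he) (hsqrt_low p)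
      calc (Real.sqrt (quadForm B p))⁻¹ * (|p i| * |p j| * f p)
          ≤ (Real.sqrt c * enorm3 p)⁻¹ * (enorm3 p * enorm3 p * f p) := by
            apply mul_le_mul h1 _
              (mul_nonneg (mul_nonneg (abs_nonneg _) (abs_nonneg _)) (hnonneg p))
              (inv_nonneg.2 (mul_pos sqrtc_pos he).le)
            apply mul_le_mul _ le_rfl (hnonneg p) (mul_nonneg (enorm3_nonneg p) (enorm3_nonneg p))
            exact mul_le_mul (abs_le_enorm3 p i) (abs_le_enorm3 p j) (abs_nonneg _)
              (enorm3_nonneg p)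
        _ = (Real.sqrt c)⁻¹ * (enorm3 p * f p) := by
            field_simp
  refine ⟨hPsiInt, ?_⟩
  set KC := Knorm C with hKC
  set ε := c / (2 * (KC + 1)) with hε
  have hKC0 : 0 ≤ KC := Knorm_nonneg C
  have hε_pos : 0 < ε := by positivity
  have hunif : ∀ s ∈ Metric.ball (0:ℝ) ε, ∀ p : Vec3,
      c / 2 * enorm3 p ^ 2 ≤ quadForm (B + s • C) p := by
    intro s hs p
    rw [quad_add_smul]
    have hsabs : |s| < ε := by simpa [Real.dist_eq] using hs
    have h2 : |s * quadForm C p| ≤ c / 2 * enorm3 p ^ 2 := by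
      rw [abs_mul]
      calc |s| * |quadForm C p| ≤ ε * (KC * enorm3 p ^ 2) :=
            mul_le_mul hsabs.le (quad_le C p) (abs_nonneg _) hε_pos.le
        _ ≤ c / 2 * enorm3 p ^ 2 := by
            rw [hε]
            rw [div_mul_eq_mul_div, div_mul_eq_mul_div, div_le_div_iff₀ (by positivity) two_pos]
            nlinarith [sq_nonneg (enorm3 p), enorm3_nonneg p]
    have h3 := hlow p
    nlinarith [abs_le.1 h2]
  set F : ℝ → Vec3 → ℝ := fun s p => Real.sqrt (quadForm (B + s • C) p) * f p with hF
  set F' : ℝ → Vec3 → ℝ :=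
    fun s p => quadForm C p * (2 * Real.sqrt (quadForm (B + s • C) p))⁻¹ * f p with hF'
  have hmeasF : ∀ s : ℝ, AEStronglyMeasurable (F s) volume := by
    intro s
    exact (((quad_cont _).measurable.sqrt).mul hmeas).aestronglyMeasurable
  have hmeasF' : AEStronglyMeasurable (F' 0) volume := by
    apply Measurable.aestronglyMeasurable
    exact ((quad_cont C).measurable.mul
      ((measurable_const.mul (quad_cont _).measurable.sqrt).inv)).mul hmeas
  have hintF0 : Integrable (F 0) volume := by
    refine integrable_dom hnonneg hint (hmeasF 0) (K := Real.sqrt (Knorm B)) fun p => ?_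
    rw [hF]
    simp only
    rw [abs_mul, abs_of_nonneg (hnonneg p), abs_of_nonneg (Real.sqrt_nonneg _)]
    have h1 : quadForm (B + (0:ℝ) • C) p = quadForm B p := by rw [quad_add_smul]; ring
    rw [h1]
    have h2 : quadForm B p ≤ Knorm B * enorm3 p ^ 2 := (le_abs_self _).trans (quad_le B p)
    calc Real.sqrt (quadForm B p) * f p
        ≤ Real.sqrt (Knorm B * enorm3 p ^ 2) * f p := by
          apply mul_le_mul_of_nonneg_right (Real.sqrt_le_sqrt h2) (hnonneg p)
      _ = Real.sqrt (Knorm B) * (enorm3 p * f p) := by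
          rw [Real.sqrt_mul (Knorm_nonneg B), Real.sqrt_sq (enorm3_nonneg p)]
          ring
  set Kb : ℝ := KC * (2 * Real.sqrt (c / 2))⁻¹ with hKb
  have hKb0 : 0 ≤ Kb := by positivity
  have h_bound : ∀ᵐ p : Vec3, ∀ s ∈ Metric.ball (0:ℝ) ε, ‖F' s p‖ ≤ Kb * (enorm3 p * f p) := by
    refine ae_of_all _ fun p s hs => ?_
    by_cases hp : p = 0
    · subst hp
      simp only [hF', quad_zero, zero_mul, norm_zero]
      exact mul_nonneg hKb0 (mul_nonneg (enorm3_nonneg 0) (hnonneg 0))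
    · have he : 0 < enorm3 p := enorm3_pos hp
      have hq : Real.sqrt (c / 2) * enorm3 p ≤ Real.sqrt (quadForm (B + s • C) p) := by
        calc Real.sqrt (c / 2) * enorm3 p = Real.sqrt (c / 2 * enorm3 p ^ 2) := by
              rw [Real.sqrt_mul (by positivity), Real.sqrt_sq (enorm3_nonneg p)]
          _ ≤ _ := Real.sqrt_le_sqrt (hunif s hs p)
      have hqpos : 0 < Real.sqrt (quadForm (B + s • C) p) :=
        lt_of_lt_of_le (by positivity) hq
      rw [Real.norm_eq_abs, hF']
      simp only
      rw [abs_mul, abs_mul, abs_of_nonneg (hnonneg p), abs_inv,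
        abs_of_pos (by positivity : (0:ℝ) < 2 * Real.sqrt (quadForm (B + s • C) p))]
      have h1 : (2 * Real.sqrt (quadForm (B + s • C) p))⁻¹
          ≤ (2 * (Real.sqrt (c / 2) * enorm3 p))⁻¹ :=
        inv_anti₀ (by positivity) (by linarith)
      calc |quadForm C p| * (2 * Real.sqrt (quadForm (B + s • C) p))⁻¹ * f p
          ≤ KC * enorm3 p ^ 2 * (2 * (Real.sqrt (c / 2) * enorm3 p))⁻¹ * f p := by
            apply mul_le_mul_of_nonneg_right _ (hnonneg p)
            exact mul_le_mul (quad_le C p) h1 (by positivity) (by positivity)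
        _ = Kb * (enorm3 p * f p) := by
            rw [hKb]
            field_simp
  have h_diff : ∀ᵐ p : Vec3, ∀ s ∈ Metric.ball (0:ℝ) ε, HasDerivAt (F · p) (F' s p) s := by
    refine ae_of_all _ fun p s hs => ?_
    by_cases hp : p = 0
    · subst hp
      have hFconst : (F · (0:Vec3)) = fun _ => 0 := by
        funext t; simp [hF, quad_zero]
      have hF'0 : F' s 0 = 0 := by simp [hF', quad_zero]
      rw [hFconst, hF'0]
      exact hasDerivAt_const s 0
    · have he : 0 < enorm3 p := enorm3_pos hp
      have hqpos : 0 < quadForm (B + s • C) p :=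
        lt_of_lt_of_le (by positivity) (hunif s hs p)
      have hlin : HasDerivAt (fun t : ℝ => quadForm (B + t • C) p) (quadForm C p) s := by
        have : (fun t : ℝ => quadForm (B + t • C) p)
            = fun t : ℝ => quadForm B p + t * quadForm C p := by
          funext t; exact quad_add_smul B C t p
        rw [this]
        simpa using ((hasDerivAt_id s).mul_const (quadForm C p)).const_add (quadForm B p)
      have hs1 : HasDerivAt (fun t : ℝ => Real.sqrt (quadForm (B + t • C) p))
          (quadForm C p / (2 * Real.sqrt (quadForm (B + s • C) p))) s :=
        hlin.sqrt hqpos.ne'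
      have h2 := hs1.mul_const (f p)
      have h3 : F' s p = quadForm C p / (2 * Real.sqrt (quadForm (B + s • C) p)) * f p := by
        rw [hF', div_eq_mul_inv]
      rw [h3]
      exact h2
  have key := hasDerivAt_integral_of_dominated_loc_of_deriv_le (Metric.ball_mem_nhds 0 hε_pos)
    (Filter.Eventually.of_forall fun s => hmeasF s) hintF0 hmeasF' h_bound
    (hint.const_mul Kb) h_diff
  have hder := key.2
  have h0 : F' 0 = fun p => quadForm C p * (2 * Real.sqrt (quadForm B p))⁻¹ * f p := by
    funext p
    rw [hF']
    simp only
    congr 3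
    rw [quad_add_smul]; ring
  rw [h0] at hder
  exact hder

/-- derivative of the tail 2 (det)^{-1/2} + 4 (det)^{1/2} hᵀ(B+sC)⁻¹h -/
lemma tail_deriv (B C : Mat3) (h : Vec3) (hB : B.PosDef) :
    HasDerivAt (fun s : ℝ =>
        2 * (Real.sqrt (B + s • C).det)⁻¹
          + 4 * Real.sqrt (B + s • C).det * (h ⬝ᵥ ((B + s • C)⁻¹).mulVec h))
      (2 * (-(((B.adjugate * C).trace) / (2 * Real.sqrt B.det)) / (Real.sqrt B.det) ^ 2)
        + 4 * (((B.adjugate * C).trace / (2 * Real.sqrt B.det))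
              * ((B.det)⁻¹ * (h ⬝ᵥ (B.adjugate).mulVec h))
            + Real.sqrt B.det * (-(B.adjugate * C).trace / B.det ^ 2
                  * (h ⬝ᵥ (B.adjugate).mulVec h)
                + (B.det)⁻¹ * (h ⬝ᵥ ((B + C).adjugate).mulVec h
                    - h ⬝ᵥ (B.adjugate).mulVec h - h ⬝ᵥ (C.adjugate).mulVec h)))) 0 := by
  have hdet : 0 < B.det := hB.det_pos
  have hr : 0 < Real.sqrt B.det := Real.sqrt_pos.2 hdet
  set t := (B.adjugate * C).trace
  set t2 := (C.adjugate * B).trace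
  set g0 := h ⬝ᵥ (B.adjugate).mulVec h with hg0def
  set g2 := h ⬝ᵥ (C.adjugate).mulVec h with hg2def
  set g1 := h ⬝ᵥ ((B + C).adjugate).mulVec h - g0 - g2 with hg1def
  have hd : HasDerivAt (fun s : ℝ => (B + s • C).det) t 0 := by
    have heq : (fun s : ℝ => (B + s • C).det)
        = fun s : ℝ => B.det + s * t + s^2 * t2 + s^3 * C.det :=
      funext fun s => det_add_smul B C s
    rw [heq]
    have h1 : HasDerivAt (fun s : ℝ => B.det + s * t + s^2 * t2 + s^3 * C.det)
        (0 + 1 * t + (↑2 * (0:ℝ)^1) * t2 + (↑3 * (0:ℝ)^2) * C.det) 0 := by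
      exact (((hasDerivAt_const 0 B.det).add ((hasDerivAt_id 0).mul_const t)).add
        ((hasDerivAt_pow 2 0).mul_const t2)).add ((hasDerivAt_pow 3 0).mul_const C.det)
    simpa using h1
  have hg : HasDerivAt (fun s : ℝ => h ⬝ᵥ ((B + s • C).adjugate).mulVec h) g1 0 := by
    have heq : (fun s : ℝ => h ⬝ᵥ ((B + s • C).adjugate).mulVec h)
        = fun s : ℝ => g0 + s * g1 + s^2 * g2 :=
      funext fun s => g_poly B C h s
    rw [heq]
    have h1 : HasDerivAt (fun s : ℝ => g0 + s * g1 + s^2 * g2)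
        (0 + 1 * g1 + (↑2 * (0:ℝ)^1) * g2) 0 :=
      ((hasDerivAt_const 0 g0).add ((hasDerivAt_id 0).mul_const g1)).add
        ((hasDerivAt_pow 2 0).mul_const g2)
    simpa using h1
  have hB0 : B + (0:ℝ) • C = B := by simp
  have hev : ∀ᶠ s : ℝ in 𝓝 0, 0 < (B + s • C).det := by
    have hcont : ContinuousAt (fun s : ℝ => (B + s • C).det) 0 := hd.continuousAt
    have h0' : (0:ℝ) < (fun s : ℝ => (B + s • C).det) 0 := by simpa [hB0] using hdet
    have := hcont (Ioi_mem_nhds h0')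
    exact this
  have heq : ∀ᶠ s : ℝ in 𝓝 0,
      2 * (Real.sqrt (B + s • C).det)⁻¹
        + 4 * (Real.sqrt (B + s • C).det
            * (((B + s • C).det)⁻¹ * (h ⬝ᵥ ((B + s • C).adjugate).mulVec h)))
      = 2 * (Real.sqrt (B + s • C).det)⁻¹
        + 4 * Real.sqrt (B + s • C).det * (h ⬝ᵥ ((B + s • C)⁻¹).mulVec h) := by
    filter_upwards [hev] with s hs
    rw [Matrix.inv_def, Ring.inverse_eq_inv, Matrix.smul_mulVec, dotProduct_smul,
      smul_eq_mul]
    ring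
  have hsq : HasDerivAt (fun s : ℝ => Real.sqrt (B + s • C).det)
      (t / (2 * Real.sqrt B.det)) 0 := by
    have := hd.sqrt (by simp only [hB0]; exact hdet.ne')
    simp only [hB0] at this
    exact this
  have hinv : HasDerivAt (fun s : ℝ => (Real.sqrt (B + s • C).det)⁻¹)
      (-(t / (2 * Real.sqrt B.det)) / (Real.sqrt B.det) ^ 2) 0 := by
    have := hsq.inv (by simp only [hB0]; exact hr.ne')
    simp only [hB0] at this
    exact this
  have hdinv : HasDerivAt (fun s : ℝ => ((B + s • C).det)⁻¹) (-t / B.det ^ 2) 0 := by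
    have := hd.inv (by simp only [hB0]; exact hdet.ne')
    simp only [hB0] at this
    exact this
  have hprod : HasDerivAt (fun s : ℝ => ((B + s • C).det)⁻¹
      * (h ⬝ᵥ ((B + s • C).adjugate).mulVec h))
      (-t / B.det ^ 2 * g0 + (B.det)⁻¹ * g1) 0 := by
    have := hdinv.mul hg
    simp only [hB0] at this
    exact this
  have htotal := (hinv.const_mul 2).add ((hsq.mul hprod).const_mul 4)
  simp only [hB0] at htotal
  have hfinal : HasDerivAt (fun s : ℝ =>
      2 * (Real.sqrt (B + s • C).det)⁻¹
        + 4 * (Real.sqrt (B + s • C).det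
            * (((B + s • C).det)⁻¹ * (h ⬝ᵥ ((B + s • C).adjugate).mulVec h))))
      (2 * (-(t / (2 * Real.sqrt B.det)) / (Real.sqrt B.det) ^ 2)
        + 4 * ((t / (2 * Real.sqrt B.det)) * ((B.det)⁻¹ * g0)
            + Real.sqrt B.det * (-t / B.det ^ 2 * g0 + (B.det)⁻¹ * g1))) 0 := by
    exact htotal
  exact hfinal.congr_of_eventuallyEq (heq.mono fun s hs => hs.symm)

/-- the main derivative computation -/
lemma main_deriv {f : Vec3 → ℝ} {h : Vec3}
    (hmeas : Measurable f) (hnonneg : ∀ p, 0 ≤ f p)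
    (hint : Integrable (fun p : Vec3 => enorm3 p * f p))
    (B : Mat3) (hB : B.PosDef) (C : Mat3) (hC : C.IsSymm) :
    HasDerivAt (fun s : ℝ => Ffun f h (B + s • C))
      ((Real.sqrt B.det)⁻¹ * ∑ i, ∑ j,
        (2 * PsiM f B i j - (B⁻¹) i j
          + (2 / (B⁻¹).det) * ((h ⬝ᵥ (B⁻¹).mulVec h) * (B⁻¹) i j
            - 2 * (B⁻¹).mulVec h i * (B⁻¹).mulVec h j)) * C i j) 0 := by
  have hdet : 0 < B.det := hB.det_pos
  have hr : 0 < Real.sqrt B.det := Real.sqrt_pos.2 hdet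
  have hr2 : (Real.sqrt B.det) ^ 2 = B.det := Real.sq_sqrt hdet.le
  have hBsymm : Bᵀ = B := (Matrix.conjTranspose_eq_transpose_of_trivial B).symm.trans hB.1
  have hCsymm : Cᵀ = C := hC
  obtain ⟨hPsiInt, hIderiv⟩ := intpart hmeas hnonneg hint B C hB
  have htail := tail_deriv B C h hB
  set r := Real.sqrt B.det with hrdef
  set t := (B.adjugate * C).trace with htdef
  set g0 := h ⬝ᵥ (B.adjugate).mulVec h with hg0def
  set g1 := h ⬝ᵥ ((B + C).adjugate).mulVec h - g0 - h ⬝ᵥ (C.adjugate).mulVec h with hg1def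
  set u' : Vec3 := B.adjugate.mulVec h with hu'def
  set w := u' ⬝ᵥ C.mulVec u' with hwdef
  set I : Fin 3 → Fin 3 → ℝ :=
    fun i j => ∫ p : Vec3, (Real.sqrt (quadForm B p))⁻¹ * (p i * p j * f p) with hIdef
  set S := ∑ i, ∑ j, I i j * C i j with hSdef
  -- combine the two derivative parts
  have hcomb := (hIderiv.const_mul (16 * π)).add htail
  have hfun : (fun s : ℝ => Ffun f h (B + s • C))
      = fun s : ℝ => 16 * π * (∫ p : Vec3, Real.sqrt (quadForm (B + s • C) p) * f p)
          + (2 * (Real.sqrt (B + s • C).det)⁻¹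
            + 4 * Real.sqrt (B + s • C).det * (h ⬝ᵥ ((B + s • C)⁻¹).mulVec h)) := by
    funext s
    simp only [Ffun]
    ring
  replace hcomb := hcomb.congr_of_eventuallyEq (f₁ := fun s : ℝ => Ffun f h (B + s • C))
    (Filter.Eventually.of_forall fun s => congrFun hfun s)
  -- now identify the derivative values
  refine hcomb.congr_deriv (Eq.symm ?_)
  -- Step A : the integral of the derivative equals the Ψ sums
  have stepA : (∫ p : Vec3, quadForm C p * (2 * Real.sqrt (quadForm B p))⁻¹ * f p)
      = 2⁻¹ * S := by
    have h1 : (fun p : Vec3 => quadForm C p * (2 * Real.sqrt (quadForm B p))⁻¹ * f p)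
        = fun p => ∑ i, ∑ j,
            (C i j * 2⁻¹) * ((Real.sqrt (quadForm B p))⁻¹ * (p i * p j * f p)) := by
      funext p
      rw [quad_expand, Finset.sum_mul, Finset.sum_mul]
      refine Finset.sum_congr rfl fun i _ => ?_
      rw [Finset.sum_mul, Finset.sum_mul]
      refine Finset.sum_congr rfl fun j _ => ?_
      rw [mul_inv]
      ring
    rw [h1, integral_finset_sum _
      (fun i _ => integrable_finset_sum _ (fun j _ => (hPsiInt i j).const_mul _))]
    rw [hSdef, Finset.mul_sum]
    refine Finset.sum_congr rfl fun i _ => ?_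
    rw [integral_finset_sum _ (fun j _ => (hPsiInt i j).const_mul _), Finset.mul_sum]
    refine Finset.sum_congr rfl fun j _ => ?_
    rw [integral_const_mul]
    ring
  -- entries of B⁻¹ in terms of the adjugate
  have hBinv_apply : ∀ i j, (B⁻¹) i j = (B.det)⁻¹ * B.adjugate i j := by
    intro i j
    rw [Matrix.inv_def, Ring.inverse_eq_inv]
    simp [Matrix.smul_apply, smul_eq_mul]
  have hBinv_mulVec : ∀ i, (B⁻¹).mulVec h i = (B.det)⁻¹ * u' i := by
    intro i
    rw [Matrix.inv_def, Ring.inverse_eq_inv, Matrix.smul_mulVec]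
    simp [hu'def]
  have hdot : h ⬝ᵥ (B⁻¹).mulVec h = (B.det)⁻¹ * g0 := by
    rw [Matrix.inv_def, Ring.inverse_eq_inv, Matrix.smul_mulVec, dotProduct_smul,
      smul_eq_mul, hg0def]
  have hdetinv : (B⁻¹).det = (B.det)⁻¹ := by
    rw [Matrix.det_nonsing_inv, Ring.inverse_eq_inv]
  have hPsi : ∀ i j, PsiM f B i j = 4 * π * r * I i j := fun i j => rfl
  -- the target sum in closed form
  have EqB : (∑ i, ∑ j,
        (2 * PsiM f B i j - (B⁻¹) i j
          + (2 / (B⁻¹).det) * ((h ⬝ᵥ (B⁻¹).mulVec h) * (B⁻¹) i j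
            - 2 * (B⁻¹).mulVec h i * (B⁻¹).mulVec h j)) * C i j)
      = 8 * π * r * S + ((B.det)⁻¹ * (2 * g0 - 1) * t - 4 * (B.det)⁻¹ * w) := by
    have hterm : ∀ i j : Fin 3,
        (2 * PsiM f B i j - (B⁻¹) i j
          + (2 / (B⁻¹).det) * ((h ⬝ᵥ (B⁻¹).mulVec h) * (B⁻¹) i j
            - 2 * (B⁻¹).mulVec h i * (B⁻¹).mulVec h j)) * C i j
        = 8 * π * r * (I i j * C i j)
          + ((B.det)⁻¹ * (2 * g0 - 1) * (B.adjugate i j * C i j)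
            - 4 * (B.det)⁻¹ * ((u' i * u' j) * C i j)) := by
      intro i j
      rw [hPsi i j, hBinv_apply i j, hdot, hBinv_mulVec i, hBinv_mulVec j, hdetinv]
      field_simp
      ring
    calc (∑ i, ∑ j, _) = ∑ i, ∑ j, (8 * π * r * (I i j * C i j)
          + ((B.det)⁻¹ * (2 * g0 - 1) * (B.adjugate i j * C i j)
            - 4 * (B.det)⁻¹ * ((u' i * u' j) * C i j))) :=
        Finset.sum_congr rfl fun i _ => Finset.sum_congr rfl fun j _ => hterm i j
      _ = 8 * π * r * S + ((B.det)⁻¹ * (2 * g0 - 1) * (∑ i, ∑ j, B.adjugate i j * C i j)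
            - 4 * (B.det)⁻¹ * (∑ i, ∑ j, (u' i * u' j) * C i j)) := by
        simp only [Finset.sum_add_distrib, Finset.sum_sub_distrib, ← Finset.mul_sum, hSdef]
      _ = 8 * π * r * S + ((B.det)⁻¹ * (2 * g0 - 1) * t - 4 * (B.det)⁻¹ * w) := by
        rw [← trace_adj_mul B C hCsymm, quad_expand2, ← hwdef, ← htdef]
  rw [EqB, stepA]
  -- the key polynomial identity
  have key : B.det * g1 = t * g0 - w := by
    rw [hg1def, htdef, hg0def, hwdef, hu'def]
    exact key_identity B C h hBsymm hCsymm
  -- now pure scalar algebra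
  have hg1val : g1 = (t * g0 - w) / B.det := by
    field_simp
    linarith [key]
  rw [hg1val, ← hr2]
  have hrne : r ≠ 0 := hr.ne'
  field_simp
  ring

/-- directional derivative of F at a positive definite B in a symmetric
direction C, and criticality ⟺ Fuchsian condition. -/
theorem Ffun_deriv_and_critical_iff_fuchs (f : Vec3 → ℝ) (h : Vec3)
    (hmeas : Measurable f) (hnonneg : ∀ p, 0 ≤ f p)
    (hint : Integrable (fun p : Vec3 => enorm3 p * f p)) :
    (∀ B : Mat3, B.PosDef → ∀ C : Mat3, C.IsSymm →
      HasDerivAt (fun s : ℝ => Ffun f h (B + s • C))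
        ((Real.sqrt B.det)⁻¹ * ∑ i, ∑ j,
          (2 * PsiM f B i j - (B⁻¹) i j
            + (2 / (B⁻¹).det) * ((h ⬝ᵥ (B⁻¹).mulVec h) * (B⁻¹) i j
              - 2 * (B⁻¹).mulVec h i * (B⁻¹).mulVec h j)) * C i j) 0) ∧
    (∀ B : Mat3, B.PosDef →
      ((∀ C : Mat3, C.IsSymm → HasDerivAt (fun s : ℝ => Ffun f h (B + s • C)) 0 0)
        ↔ FuchsCond f h B)) := by
  refine ⟨fun B hB C hC => main_deriv hmeas hnonneg hint B hB C hC, fun B hB => ?_⟩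
  have hdet : 0 < B.det := hB.det_pos
  have hr : 0 < Real.sqrt B.det := Real.sqrt_pos.2 hdet
  have hBsymm : Bᵀ = B := (Matrix.conjTranspose_eq_transpose_of_trivial B).symm.trans hB.1
  set Mm : Mat3 := Matrix.of fun i j =>
    2 * PsiM f B i j - (B⁻¹) i j
      + (2 / (B⁻¹).det) * ((h ⬝ᵥ (B⁻¹).mulVec h) * (B⁻¹) i j
        - 2 * (B⁻¹).mulVec h i * (B⁻¹).mulVec h j) with hMmdef
  have hMm_apply : ∀ i j, Mm i j
      = 2 * PsiM f B i j - (B⁻¹) i j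
        + (2 / (B⁻¹).det) * ((h ⬝ᵥ (B⁻¹).mulVec h) * (B⁻¹) i j
          - 2 * (B⁻¹).mulVec h i * (B⁻¹).mulVec h j) := fun i j => rfl
  have hPsisymm : ∀ i j, PsiM f B j i = PsiM f B i j := by
    intro i j
    simp only [PsiM, Matrix.of_apply]
    congr 1
    have : (fun p : Vec3 => (Real.sqrt (quadForm B p))⁻¹ * (p j * p i * f p))
        = fun p : Vec3 => (Real.sqrt (quadForm B p))⁻¹ * (p i * p j * f p) := by
      funext p; ring
    rw [this]
  have hAsymmM : (B⁻¹)ᵀ = B⁻¹ := by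
    rw [Matrix.transpose_nonsing_inv, hBsymm]
  have hAsymm : ∀ i j : Fin 3, (B⁻¹) j i = (B⁻¹) i j := fun i j => symm_apply hAsymmM i j
  have hMsymm : Mm.IsSymm := by
    show Mmᵀ = Mm
    ext i j
    rw [Matrix.transpose_apply, hMm_apply i j, hMm_apply j i, hPsisymm i j, hAsymm i j]
    ring
  constructor
  · intro hcrit
    have hD := (main_deriv hmeas hnonneg hint B hB Mm hMsymm).unique (hcrit Mm hMsymm)
    have hsum : (∑ i, ∑ j, Mm i j * Mm i j) = 0 := by
      have hrne : (Real.sqrt B.det)⁻¹ ≠ 0 := inv_ne_zero hr.ne'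
      have := mul_eq_zero.1 hD
      rcases this with h1 | h2
      · exact absurd h1 hrne
      · exact h2
    have hzero : ∀ i j : Fin 3, Mm i j = 0 := by
      have hsq : (∑ i, ∑ j, (Mm i j)^2) = 0 := by
        rw [← hsum]
        exact Finset.sum_congr rfl fun i _ => Finset.sum_congr rfl fun j _ => (sq (Mm i j)).symm ▸ (sq (Mm i j))
      intro i j
      have h1 := (Finset.sum_eq_zero_iff_of_nonneg
        (fun i _ => Finset.sum_nonneg fun j _ => sq_nonneg (Mm i j))).1 hsq i (Finset.mem_univ i)
      have h2 := (Finset.sum_eq_zero_iff_of_nonneg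
        (fun j _ => sq_nonneg (Mm i j))).1 h1 j (Finset.mem_univ j)
      exact pow_eq_zero_iff (n := 2) (by norm_num) |>.1 h2
    -- conclude the Fuchsian condition
    unfold FuchsCond
    ext i j
    have := hzero i j
    rw [hMm_apply i j] at this
    simp only [Matrix.smul_apply, Matrix.sub_apply, Matrix.vecMulVec_apply, smul_eq_mul]
    linarith [this]
  · intro hFuchs C hC
    have hzero : ∀ i j : Fin 3, Mm i j = 0 := by
      intro i j
      have h1 := congrFun (congrFun hFuchs i) j
      rw [hMm_apply i j]
      simp only [Matrix.smul_apply, Matrix.sub_apply, Matrix.vecMulVec_apply,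
        smul_eq_mul] at h1
      linarith [h1]
    have hD := main_deriv (f := f) (h := h) hmeas hnonneg hint B hB C hC
    have hval : ((Real.sqrt B.det)⁻¹ * ∑ i, ∑ j,
        (2 * PsiM f B i j - (B⁻¹) i j
          + (2 / (B⁻¹).det) * ((h ⬝ᵥ (B⁻¹).mulVec h) * (B⁻¹) i j
            - 2 * (B⁻¹).mulVec h i * (B⁻¹).mulVec h j)) * C i j) = 0 := by
      have : (∑ i, ∑ j : Fin 3,
          (2 * PsiM f B i j - (B⁻¹) i j
            + (2 / (B⁻¹).det) * ((h ⬝ᵥ (B⁻¹).mulVec h) * (B⁻¹) i j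
              - 2 * (B⁻¹).mulVec h i * (B⁻¹).mulVec h j)) * C i j) = 0 := by
        refine Finset.sum_eq_zero fun i _ => Finset.sum_eq_zero fun j _ => ?_
        rw [← hMm_apply i j, hzero i j, zero_mul]
      rw [this, mul_zero]
    rw [hval] at hD
    exact hD
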